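/- Let N ≥ 1 and n ≥ 1, and let G be an undirected connected graph on nodes {1,…,N} with neighbor sets N_i. For each i let f_i : [0,∞) × ℝⁿ → ℝⁿ be continuous, continuously differentiable in its second argument, globally L_f-Lipschitz in the second argument uniformly in t, and uniformly bounded in t (i.e. sup_t ‖f_i(t,0)‖ < ∞). Define the blended dynamics vector field f̄(t,s) := (1/N) Σ_{i=1}^N f_i(t,s) and assume it is contractive: there exist a symmetric positive definite matrix H_c ∈ ℝ^{n×n} and λ_c > 0 such that H_c · D₂f̄(t,x) + D₂f̄(t,x)ᵀ · H_c ⪯ −λ_c H_c for all x ∈ ℝⁿ and t ≥ 0, where D₂f̄ denotes the Jacobian in the second argument. Then for every ε > 0 there exists k* > 0 such that for all k > k*, every family of functions x_i : [0,∞) → ℝⁿ satisfying ẋ_i(t) = f_i(t,x_i(t)) + k Σ_{p∈N_i}(x_p(t) − x_i(t)) for all t ≥ 0, together with every solution s : [0,∞) → ℝⁿ of ṡ(t) = f̄(t,s(t)), with arbitrary initial conditions, satisfies limsup_{t→∞} ‖x_i(t) − s(t)‖ ≤ ε for every i ∈ {1,…,N}. -/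

import Mathlib

open Filter Matrix
open scoped RealInnerProductSpace

section quad
variable {F : Type*} [NormedAddCommGroup F] [NormedSpace ℝ F] [FiniteDimensional ℝ F]

lemma sphere_compact' : IsCompact {v : F | ‖v‖ = 1} := by
  apply Metric.isCompact_of_isClosed_isBounded
  · exact isClosed_eq continuous_norm continuous_const
  · exact (isBounded_iff_forall_norm_le).2 ⟨1, fun v hv => le_of_eq hv⟩

omit [FiniteDimensional ℝ F] in
lemma quad_zero (q : F → ℝ) (hqh : ∀ (c : ℝ) (v : F), q (c • v) = c ^ 2 * q v) :
    q (0 : F) = 0 := by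
  have := hqh 0 0; simpa using this

lemma quad_lower_norm (q : F → ℝ) (hqc : Continuous q) (hq0 : ∀ v, v ≠ 0 → 0 < q v)
    (hqh : ∀ (c : ℝ) (v : F), q (c • v) = c ^ 2 * q v) :
    ∃ m > 0, ∀ v : F, m * ‖v‖ ^ 2 ≤ q v := by
  by_cases hS : ({v : F | ‖v‖ = 1} : Set F).Nonempty
  · obtain ⟨v₀, hv₀, hmin⟩ := sphere_compact'.exists_isMinOn hS hqc.continuousOn
    have hv₀1 : ‖v₀‖ = 1 := hv₀
    have hv₀ne : v₀ ≠ 0 := fun h => by simp [h] at hv₀1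
    refine ⟨q v₀, hq0 v₀ hv₀ne, fun v => ?_⟩
    rcases eq_or_ne v 0 with rfl | hv
    · simp [quad_zero q hqh]
    · have hnv : ‖v‖ ≠ 0 := norm_ne_zero_iff.2 hv
      have hu : (‖v‖⁻¹ • v) ∈ {v : F | ‖v‖ = 1} := by
        simp only [Set.mem_setOf_eq, norm_smul]; simp [hnv]
      have h1 : q v₀ ≤ q (‖v‖⁻¹ • v) := hmin hu
      rw [hqh _ _] at h1
      have := mul_le_mul_of_nonneg_right h1 (by positivity : (0:ℝ) ≤ ‖v‖ ^ 2)
      have h2 : ‖v‖⁻¹ ^ 2 * q v * ‖v‖ ^ 2 = q v := by field_simp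
      linarith
  · refine ⟨1, one_pos, fun v => ?_⟩
    have hv : v = 0 := by
      by_contra hv
      exact hS ⟨‖v‖⁻¹ • v, by
        simp only [Set.mem_setOf_eq, norm_smul]; simp [norm_ne_zero_iff.2 hv]⟩
    simp [hv, quad_zero q hqh]

end quad

lemma quad_upper_norm {F : Type*} [NormedAddCommGroup F] [NormedSpace ℝ F]
    [FiniteDimensional ℝ F] (q : F → ℝ) (hqc : Continuous q)
    (hqh : ∀ (c : ℝ) (v : F), q (c • v) = c ^ 2 * q v) :
    ∃ M > 0, ∀ v : F, q v ≤ M * ‖v‖ ^ 2 := by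
  by_cases hS : ({v : F | ‖v‖ = 1} : Set F).Nonempty
  · obtain ⟨v₀, hv₀, hmax⟩ := sphere_compact'.exists_isMaxOn hS hqc.continuousOn
    refine ⟨max (q v₀) 1, lt_max_of_lt_right one_pos, fun v => ?_⟩
    rcases eq_or_ne v 0 with rfl | hv
    · simp [quad_zero q hqh]
    · have hnv : ‖v‖ ≠ 0 := norm_ne_zero_iff.2 hv
      have hu : (‖v‖⁻¹ • v) ∈ {v : F | ‖v‖ = 1} := by
        simp only [Set.mem_setOf_eq, norm_smul]; simp [hnv]
      have h1 : q (‖v‖⁻¹ • v) ≤ q v₀ := hmax hu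
      rw [hqh _ _] at h1
      have h1' : ‖v‖⁻¹ ^ 2 * q v ≤ max (q v₀) 1 := h1.trans (le_max_left _ _)
      have := mul_le_mul_of_nonneg_right h1' (by positivity : (0:ℝ) ≤ ‖v‖ ^ 2)
      have h2 : ‖v‖⁻¹ ^ 2 * q v * ‖v‖ ^ 2 = q v := by field_simp
      linarith
  · refine ⟨1, one_pos, fun v => ?_⟩
    have hv : v = 0 := by
      by_contra hv
      exact hS ⟨‖v‖⁻¹ • v, by
        simp only [Set.mem_setOf_eq, norm_smul]; simp [norm_ne_zero_iff.2 hv]⟩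
    simp [hv, quad_zero q hqh]

lemma gap_lemma {N : ℕ} (hN : 1 ≤ N) (G : SimpleGraph (Fin N)) [DecidableRel G.Adj]
    (hG : G.Connected) {E : Type*} [NormedAddCommGroup E] [NormedSpace ℝ E]
    [FiniteDimensional ℝ E] :
    ∃ μ > 0, ∀ d : Fin N → E, (∑ i, d i = 0) →
      μ * ∑ i, ‖d i‖ ^ 2 ≤ ∑ i, ∑ p ∈ G.neighborFinset i, ‖d i - d p‖ ^ 2 := by
  classical
  -- the subspace of zero-sum tuples
  let L : (Fin N → E) →ₗ[ℝ] E :=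
    { toFun := fun d => ∑ i, d i
      map_add' := fun a b => by simp [Finset.sum_add_distrib]
      map_smul' := fun c a => by simp [Finset.smul_sum] }
  let K : Submodule ℝ (Fin N → E) := LinearMap.ker L
  let q : K → ℝ := fun d => ∑ i, ∑ p ∈ G.neighborFinset i, ‖(d : Fin N → E) i - (d : Fin N → E) p‖ ^ 2
  let r : K → ℝ := fun d => ∑ i, ‖(d : Fin N → E) i‖ ^ 2
  have hqc : Continuous q := by
    apply continuous_finset_sum
    intro i _
    apply continuous_finset_sum
    intro p _
    exact (((continuous_apply i).comp continuous_subtype_val).sub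
      ((continuous_apply p).comp continuous_subtype_val)).norm.pow 2
  have hrc : Continuous r := by
    apply continuous_finset_sum
    intro i _
    exact ((continuous_apply i).comp continuous_subtype_val).norm.pow 2
  have hqh : ∀ (c : ℝ) (v : K), q (c • v) = c ^ 2 * q v := by
    intro c v
    simp only [q, Finset.mul_sum]
    refine Finset.sum_congr rfl fun i _ => Finset.sum_congr rfl fun p _ => ?_
    have : ((c • v : K) : Fin N → E) = c • (v : Fin N → E) := rfl
    rw [this]
    simp only [Pi.smul_apply, ← smul_sub, norm_smul]
    rw [mul_pow]
    simp [sq_abs]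
  have hrh : ∀ (c : ℝ) (v : K), r (c • v) = c ^ 2 * r v := by
    intro c v
    simp only [r, Finset.mul_sum]
    refine Finset.sum_congr rfl fun i _ => ?_
    have : ((c • v : K) : Fin N → E) = c • (v : Fin N → E) := rfl
    rw [this]
    simp only [Pi.smul_apply, norm_smul, mul_pow]
    simp [sq_abs]
  have hq0 : ∀ v : K, v ≠ 0 → 0 < q v := by
    intro v hv
    have hqnn : 0 ≤ q v :=
      Finset.sum_nonneg fun i _ => Finset.sum_nonneg fun p _ => by positivity
    rcases hqnn.lt_or_eq with h | h
    · exact h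
    exfalso
    have hz : ∀ i ∈ Finset.univ, ∑ p ∈ G.neighborFinset i,
        ‖(v : Fin N → E) i - (v : Fin N → E) p‖ ^ 2 = 0 :=
      (Finset.sum_eq_zero_iff_of_nonneg fun i _ =>
        Finset.sum_nonneg fun p _ => by positivity).1 h.symm
    have hedge : ∀ a b : Fin N, G.Adj a b → (v : Fin N → E) a = (v : Fin N → E) b := by
      intro a b hab
      have := (Finset.sum_eq_zero_iff_of_nonneg fun p _ => by positivity).1
        (hz a (Finset.mem_univ a)) b (G.mem_neighborFinset a b |>.2 hab)
      have : ‖(v : Fin N → E) a - (v : Fin N → E) b‖ = 0 := by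
        nlinarith [norm_nonneg ((v : Fin N → E) a - (v : Fin N → E) b)]
      rw [norm_eq_zero, sub_eq_zero] at this
      exact this
    have hconst : ∀ i j : Fin N, (v : Fin N → E) i = (v : Fin N → E) j := by
      intro i j
      obtain ⟨w⟩ := hG.preconnected i j
      induction w with
      | nil => rfl
      | cons h p ih => exact (hedge _ _ h).trans ih
    have i₀ : Fin N := ⟨0, hN⟩
    have hsum : ∑ i, (v : Fin N → E) i = 0 := v.2
    have hsum' : ∑ i : Fin N, (v : Fin N → E) i = (N : ℝ) • (v : Fin N → E) i₀ := by
      rw [Finset.sum_congr rfl fun i _ => hconst i i₀]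
      simp [Finset.sum_const, ← Nat.cast_smul_eq_nsmul ℝ]
    have hi₀ : (v : Fin N → E) i₀ = 0 := by
      rw [hsum'] at hsum
      have hNne : (N : ℝ) ≠ 0 := Nat.cast_ne_zero.2 (by omega)
      exact (smul_eq_zero.1 hsum).resolve_left hNne
    apply hv
    apply Subtype.ext
    funext i
    rw [hconst i i₀, hi₀]
    rfl
  have hr0 : ∀ v : K, v ≠ 0 → 0 < r v := by
    intro v hv
    have hrnn : 0 ≤ r v := Finset.sum_nonneg fun i _ => by positivity
    rcases hrnn.lt_or_eq with h | h
    · exact h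
    exfalso
    have hz := (Finset.sum_eq_zero_iff_of_nonneg fun i _ => by positivity).1 h.symm
    apply hv
    apply Subtype.ext
    funext i
    have := hz i (Finset.mem_univ i)
    have : ‖(v : Fin N → E) i‖ = 0 := by nlinarith [norm_nonneg ((v : Fin N → E) i)]
    simpa [norm_eq_zero] using this
  obtain ⟨m, hm, hml⟩ := quad_lower_norm q hqc hq0 hqh
  obtain ⟨R, hR, hRu⟩ := quad_upper_norm r hrc hrh
  refine ⟨m / R, div_pos hm hR, fun d hd => ?_⟩
  have hdK : d ∈ K := hd
  set v : K := ⟨d, hdK⟩ with hv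
  have h1 : m * ‖v‖ ^ 2 ≤ q v := hml v
  have h2 : r v ≤ R * ‖v‖ ^ 2 := hRu v
  have h3 : (m / R) * r v ≤ m * ‖v‖ ^ 2 := by
    rw [div_mul_eq_mul_div, div_le_iff₀ hR]
    calc m * r v ≤ m * (R * ‖v‖ ^ 2) := mul_le_mul_of_nonneg_left h2 hm.le
      _ = m * ‖v‖ ^ 2 * R := by ring
  exact (h3.trans h1)

lemma gronwall_bound {V Vd : ℝ → ℝ} {a b T : ℝ} (ha : 0 < a)
    (hV : ∀ t ≥ T, HasDerivAt V (Vd t) t)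
    (hle : ∀ t ≥ T, Vd t ≤ -a * V t + b) :
    ∀ t ≥ T, V t ≤ b / a + (V T - b / a) * Real.exp (a * T) * Real.exp (-(a * t)) := by
  set W : ℝ → ℝ := fun t => (V t - b / a) * Real.exp (a * t) with hWdef
  have hW : ∀ t ≥ T, HasDerivAt W ((Vd t + a * V t - b) * Real.exp (a * t)) t := by
    intro t ht
    have h1 : HasDerivAt (fun t => V t - b / a) (Vd t) t := (hV t ht).sub_const _
    have h2 : HasDerivAt (fun t : ℝ => Real.exp (a * t)) (Real.exp (a * t) * a) t :=
      by simpa using (((hasDerivAt_id t).const_mul a).exp)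
    have := h1.mul h2
    refine this.congr_deriv ?_
    have : (b / a) * a = b := div_mul_cancel₀ b ha.ne'
    linear_combination (-(Real.exp (a * t))) * this
  have hanti : AntitoneOn W (Set.Ici T) := by
    apply antitoneOn_of_deriv_nonpos (convex_Ici T)
    · intro t ht
      exact (hW t ht).continuousAt.continuousWithinAt
    · intro t ht
      rw [interior_Ici] at ht
      exact ((hW t (le_of_lt ht)).differentiableAt).differentiableWithinAt
    · intro t ht
      rw [interior_Ici] at ht
      rw [(hW t (le_of_lt ht)).deriv]
      apply mul_nonpos_of_nonpos_of_nonneg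
      · have := hle t (le_of_lt ht); linarith
      · positivity
  intro t ht
  have h1 : W t ≤ W T := hanti (Set.mem_Ici.2 le_rfl) ht ht
  have h2 : (V t - b / a) * Real.exp (a * t) ≤ (V T - b / a) * Real.exp (a * T) := h1
  have h3 := mul_le_mul_of_nonneg_right h2 (Real.exp_pos (-(a * t))).le
  rw [mul_assoc, ← Real.exp_add] at h3
  simp only [add_neg_cancel, Real.exp_zero, mul_one] at h3
  linarith

lemma limsup_le_of_eventually_bounds {u : ℝ → ℝ} {c : ℝ} (hu : ∀ t, 0 ≤ u t)
    (h : ∀ δ > (0:ℝ), ∀ᶠ t in atTop, u t ≤ c + δ) :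
    limsup u atTop ≤ c := by
  have hcob : IsCoboundedUnder (· ≤ ·) atTop u :=
    Filter.IsBoundedUnder.isCoboundedUnder_le (isBoundedUnder_of ⟨0, fun t => hu t⟩)
  refine le_of_forall_pos_le_add fun δ hδ => ?_
  exact Filter.limsup_le_of_le hcob (h δ hδ)

lemma le_of_deriv_le {g gd : ℝ → ℝ} {c : ℝ} (hg : ∀ τ, HasDerivAt g (gd τ) τ)
    (hle : ∀ τ, gd τ ≤ c) : g 1 ≤ g 0 + c := by
  have h : ∀ τ, HasDerivAt (fun τ => g τ - c * τ) (gd τ - c) τ := fun τ =>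
    (hg τ).sub (by simpa using (hasDerivAt_id τ).const_mul c)
  have hanti : Antitone (fun τ => g τ - c * τ) := by
    apply antitone_of_deriv_nonpos
    · exact fun τ => (h τ).differentiableAt
    · intro τ; rw [(h τ).deriv]; linarith [hle τ]
  have := hanti (by norm_num : (0:ℝ) ≤ 1)
  simp only [mul_one, mul_zero, sub_zero] at this
  linarith

lemma inner_toEuclideanLin {n : ℕ} (M : Matrix (Fin n) (Fin n) ℝ)
    (u v : EuclideanSpace ℝ (Fin n)) :
    ⟪u, (Matrix.toEuclideanLin M) v⟫ = (u : Fin n → ℝ) ⬝ᵥ M.mulVec v := by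
  simp [PiLp.inner_apply, dotProduct]
  exact Finset.sum_congr rfl fun i _ => mul_comm _ _

lemma symm_dot {n : ℕ} {Hc : Matrix (Fin n) (Fin n) ℝ} (hHcsymm : Hc.IsSymm)
    (x y : Fin n → ℝ) : x ⬝ᵥ Hc.mulVec y = y ⬝ᵥ Hc.mulVec x := by
  rw [Matrix.dotProduct_mulVec, ← Matrix.mulVec_transpose, hHcsymm.eq, dotProduct_comm]

lemma contr_pointwise {n : ℕ} {Hc Jm : Matrix (Fin n) (Fin n) ℝ} {lamc : ℝ}
    (hHcsymm : Hc.IsSymm)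
    (hP : (-(lamc • Hc) - (Hc * Jm + Jmᵀ * Hc)).PosSemidef) (w : Fin n → ℝ) :
    w ⬝ᵥ Hc.mulVec (Jm.mulVec w) ≤ -(lamc / 2) * (w ⬝ᵥ Hc.mulVec w) := by
  have h0 := hP.dotProduct_mulVec_nonneg w
  have hsw : star w = w := by ext i; simp
  rw [hsw] at h0
  simp only [Matrix.sub_mulVec, Matrix.add_mulVec, Matrix.neg_mulVec,
    Matrix.smul_mulVec, ← Matrix.mulVec_mulVec, dotProduct_sub, dotProduct_add,
    dotProduct_neg, dotProduct_smul] at h0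
  have htr : w ⬝ᵥ Jmᵀ.mulVec (Hc.mulVec w) = w ⬝ᵥ Hc.mulVec (Jm.mulVec w) := by
    rw [Matrix.dotProduct_mulVec (A := Jmᵀ), ← Matrix.mulVec_transpose, Matrix.transpose_transpose]
    exact symm_dot hHcsymm _ _
  rw [htr] at h0
  simp only [smul_eq_mul] at h0
  linarith

lemma contraction_osl {n : ℕ}
    (fbar : ℝ → EuclideanSpace ℝ (Fin n) → EuclideanSpace ℝ (Fin n))
    (J : ℝ → EuclideanSpace ℝ (Fin n) → Matrix (Fin n) (Fin n) ℝ)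
    (hJ : ∀ t ≥ (0:ℝ), ∀ x, HasFDerivAt (fbar t)
      (LinearMap.toContinuousLinearMap (Matrix.toEuclideanLin (J t x))) x)
    (Hc : Matrix (Fin n) (Fin n) ℝ) (lamc : ℝ) (hHcsymm : Hc.IsSymm)
    (hcontr : ∀ t ≥ (0:ℝ), ∀ x,
      (-(lamc • Hc) - (Hc * J t x + (J t x)ᵀ * Hc)).PosSemidef) :
    ∀ t ≥ (0:ℝ), ∀ u v : EuclideanSpace ℝ (Fin n),
      ⟪u - v, (Matrix.toEuclideanLin Hc) (fbar t u - fbar t v)⟫ ≤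
        -(lamc / 2) * ⟪u - v, (Matrix.toEuclideanLin Hc) (u - v)⟫ := by
  intro t ht u v
  set w : EuclideanSpace ℝ (Fin n) := u - v with hw
  set Hop : EuclideanSpace ℝ (Fin n) →L[ℝ] EuclideanSpace ℝ (Fin n) :=
    LinearMap.toContinuousLinearMap (Matrix.toEuclideanLin Hc) with hHop
  set φ : EuclideanSpace ℝ (Fin n) →L[ℝ] ℝ := (innerSL ℝ w).comp Hop with hφ
  set g : ℝ → ℝ := fun τ => φ (fbar t (v + τ • w)) with hg
  have hgd : ∀ τ : ℝ, HasDerivAt g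
      (φ ((LinearMap.toContinuousLinearMap (Matrix.toEuclideanLin (J t (v + τ • w)))) w)) τ := by
    intro τ
    have hline : HasDerivAt (fun τ : ℝ => v + τ • w) w τ := by
      simpa using ((hasDerivAt_id τ).smul_const w).const_add v
    have hF := (hJ t ht (v + τ • w)).comp_hasDerivAt τ hline
    exact (φ.hasFDerivAt.comp_hasDerivAt τ hF)
  have hbound : ∀ τ : ℝ,
      (φ ((LinearMap.toContinuousLinearMap (Matrix.toEuclideanLin (J t (v + τ • w)))) w))
        ≤ -(lamc / 2) * ⟪w, (Matrix.toEuclideanLin Hc) w⟫ := by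
    intro τ
    have h1 : (φ ((LinearMap.toContinuousLinearMap (Matrix.toEuclideanLin (J t (v + τ • w)))) w))
        = (w : Fin n → ℝ) ⬝ᵥ Hc.mulVec ((J t (v + τ • w)).mulVec w) := by
      rw [hφ]
      simp only [ContinuousLinearMap.comp_apply]
      rw [innerSL_apply_apply]
      exact inner_toEuclideanLin Hc w _
    rw [h1, inner_toEuclideanLin]
    exact contr_pointwise hHcsymm (hcontr t ht (v + τ • w)) w
  have hkey := le_of_deriv_le hgd hbound
  have hg1 : g 1 = ⟪w, (Matrix.toEuclideanLin Hc) (fbar t u)⟫ := by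
    rw [hg]
    simp only [one_smul, hw]
    rw [add_sub_cancel]
    rfl
  have hg0 : g 0 = ⟪w, (Matrix.toEuclideanLin Hc) (fbar t v)⟫ := by
    rw [hg]; simp only [zero_smul, add_zero]; rfl
  rw [hg1, hg0] at hkey
  have : ⟪w, (Matrix.toEuclideanLin Hc) (fbar t u - fbar t v)⟫
      = ⟪w, (Matrix.toEuclideanLin Hc) (fbar t u)⟫ - ⟪w, (Matrix.toEuclideanLin Hc) (fbar t v)⟫ := by
    rw [map_sub, inner_sub_right]
  rw [this]
  linarith
example (f : ℝ → ℝ) (b : ℝ) (hb : 0 < b) (h : Tendsto f atTop (nhds 0)) :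
    ∀ᶠ t in atTop, f t ≤ b := h.eventually (eventually_le_nhds hb)
lemma young {θ : ℝ} (hθ : 0 < θ) (a b : ℝ) : a*b ≤ θ/2*a^2 + 1/(2*θ)*b^2 := by
  have h : 0 ≤ (θ*a - b)^2 := sq_nonneg _
  have h3 : a*b = (2*θ*(a*b))/(2*θ) := by field_simp
  rw [h3, div_le_iff₀ (by positivity : (0:ℝ) < 2*θ)]
  have h4 : (θ/2*a^2 + 1/(2*θ)*b^2)*(2*θ) = θ^2*a^2 + b^2 := by field_simp
  nlinarith
set_option maxHeartbeats 2000000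

/-- Proposition 1 (blended dynamics theory): practical
synchronization of diffusively coupled heterogeneous agents under
contractivity of the blended dynamics. -/
theorem stmt_0 (N n : ℕ) (hN : 1 ≤ N) (hn : 1 ≤ n)
    (G : SimpleGraph (Fin N)) [DecidableRel G.Adj] (hG : G.Connected)
    (f : Fin N → ℝ → EuclideanSpace ℝ (Fin n) → EuclideanSpace ℝ (Fin n))
    (Lf : NNReal)
    (hcont : ∀ i, ContinuousOn (fun q : ℝ × EuclideanSpace ℝ (Fin n) => f i q.1 q.2)
      (Set.Ici 0 ×ˢ Set.univ))
    (hC1 : ∀ i, ∀ t ≥ (0:ℝ), ContDiff ℝ 1 (f i t))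
    (hLip : ∀ i, ∀ t ≥ (0:ℝ), LipschitzWith Lf (f i t))
    (hbdd : ∀ i, ∃ M : ℝ, ∀ t ≥ (0:ℝ), ‖f i t 0‖ ≤ M)
    (fbar : ℝ → EuclideanSpace ℝ (Fin n) → EuclideanSpace ℝ (Fin n))
    (hfbar : ∀ t x, fbar t x = (N : ℝ)⁻¹ • ∑ i, f i t x)
    -- `J t x` is the Jacobian of the blended dynamics in its second argument
    (J : ℝ → EuclideanSpace ℝ (Fin n) → Matrix (Fin n) (Fin n) ℝ)
    (hJ : ∀ t ≥ (0:ℝ), ∀ x, HasFDerivAt (fbar t)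
      (LinearMap.toContinuousLinearMap (Matrix.toEuclideanLin (J t x))) x)
    -- contractivity: `H_c J + Jᵀ H_c ⪯ −λ_c H_c`
    (Hc : Matrix (Fin n) (Fin n) ℝ) (lamc : ℝ)
    (hHc : Hc.PosDef) (hHcsymm : Hc.IsSymm) (hlamc : 0 < lamc)
    (hcontr : ∀ t ≥ (0:ℝ), ∀ x,
      (-(lamc • Hc) - (Hc * J t x + (J t x)ᵀ * Hc)).PosSemidef) :
    ∀ ε > (0:ℝ), ∃ kstar > (0:ℝ), ∀ k > kstar,
      ∀ x : Fin N → ℝ → EuclideanSpace ℝ (Fin n),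
        (∀ i, ∀ t ≥ (0:ℝ), HasDerivAt (x i)
          (f i t (x i t) + k • ∑ p ∈ G.neighborFinset i, (x p t - x i t)) t) →
        ∀ s : ℝ → EuclideanSpace ℝ (Fin n),
          (∀ t ≥ (0:ℝ), HasDerivAt s (fbar t (s t)) t) →
          ∀ i, Filter.limsup (fun t => ‖x i t - s t‖) Filter.atTop ≤ ε := by
  classical
  intro ε hε
  have hN0 : (0:ℝ) < N := by exact_mod_cast Nat.lt_of_lt_of_le Nat.zero_lt_one hN
  have hNne : (N:ℝ) ≠ 0 := ne_of_gt hN0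
  have hLf0 : (0:ℝ) ≤ (Lf:ℝ) := Lf.coe_nonneg
  set Hop : EuclideanSpace ℝ (Fin n) →L[ℝ] EuclideanSpace ℝ (Fin n) :=
    LinearMap.toContinuousLinearMap (Matrix.toEuclideanLin Hc) with hHopdef
  have hdot : ∀ u v : EuclideanSpace ℝ (Fin n),
      ⟪u, Hop v⟫ = (u : Fin n → ℝ) ⬝ᵥ Hc.mulVec v := fun u v => inner_toEuclideanLin Hc u v
  have hsym : ∀ u v : EuclideanSpace ℝ (Fin n), ⟪u, Hop v⟫ = ⟪v, Hop u⟫ := by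
    intro u v; rw [hdot, hdot]; exact symm_dot hHcsymm u v
  -- lower bound m for the quadratic form
  obtain ⟨m, hm0, hmq⟩ : ∃ m > 0, ∀ v : EuclideanSpace ℝ (Fin n), m * ‖v‖ ^ 2 ≤ ⟪v, Hop v⟫ := by
    apply quad_lower_norm
    · exact continuous_id.inner Hop.continuous
    · intro v hv
      rw [hdot]
      simpa using hHc.dotProduct_mulVec_pos (x := (v : Fin n → ℝ)) (by simpa using hv)
    · intro c v
      rw [_root_.map_smul, real_inner_smul_left, real_inner_smul_right]; ring
  -- upper bound M
  obtain ⟨M, hMdef⟩ : ∃ M : ℝ, M = ‖Hop‖ + 1 := ⟨_, rfl⟩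
  have hM0 : 0 < M := by rw [hMdef]; positivity
  have hMb : ∀ u v : EuclideanSpace ℝ (Fin n), ⟪u, Hop v⟫ ≤ M * ‖u‖ * ‖v‖ := by
    intro u v
    calc ⟪u, Hop v⟫ ≤ |⟪u, Hop v⟫| := le_abs_self _
      _ ≤ ‖u‖ * ‖Hop v‖ := abs_real_inner_le_norm u (Hop v)
      _ ≤ ‖u‖ * (‖Hop‖ * ‖v‖) := by
          apply mul_le_mul_of_nonneg_left (Hop.le_opNorm v) (norm_nonneg u)
      _ = ‖Hop‖ * ‖u‖ * ‖v‖ := by ring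
      _ ≤ M * ‖u‖ * ‖v‖ := by
          have h1 : ‖Hop‖ ≤ M := by rw [hMdef]; linarith
          gcongr
  have hMq : ∀ v : EuclideanSpace ℝ (Fin n), ⟪v, Hop v⟫ ≤ M * ‖v‖ ^ 2 := by
    intro v; calc ⟪v, Hop v⟫ ≤ M * ‖v‖ * ‖v‖ := hMb v v
      _ = M * ‖v‖ ^ 2 := by ring
  have hqnn : ∀ v : EuclideanSpace ℝ (Fin n), 0 ≤ ⟪v, Hop v⟫ := by
    intro v
    have := hmq v
    nlinarith only [this, norm_nonneg v, sq_nonneg ‖v‖, hm0]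
  -- spectral gap
  obtain ⟨μ, hμ0, hgap⟩ := gap_lemma hN G hG (E := EuclideanSpace ℝ (Fin n))
  -- uniform bound on f i t 0
  choose Mi hMi using hbdd
  obtain ⟨K0, hK0def⟩ : ∃ K0 : ℝ, K0 = ∑ i, |Mi i| := ⟨_, rfl⟩
  have hK00 : 0 ≤ K0 := by
    rw [hK0def]; exact Finset.sum_nonneg fun i _ => abs_nonneg _
  have hK0 : ∀ i, ∀ t ≥ (0:ℝ), ‖f i t 0‖ ≤ K0 := by
    intro i t ht
    rw [hK0def]
    calc ‖f i t 0‖ ≤ Mi i := hMi i t ht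
      _ ≤ |Mi i| := le_abs_self _
      _ ≤ ∑ i, |Mi i| := Finset.single_le_sum (fun j _ => abs_nonneg (Mi j)) (Finset.mem_univ i)
  -- fbar facts
  have hsumf : ∀ t (y : EuclideanSpace ℝ (Fin n)), ∑ i, f i t y = (N:ℝ) • fbar t y := by
    intro t y
    rw [hfbar, smul_smul, mul_inv_cancel₀ hNne, one_smul]
  have hLipR : ∀ i, ∀ t ≥ (0:ℝ), ∀ u v : EuclideanSpace ℝ (Fin n),
      ‖f i t u - f i t v‖ ≤ (Lf:ℝ) * ‖u - v‖ := by
    intro i t ht u v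
    have := (hLip i t ht).dist_le_mul u v
    simpa [dist_eq_norm] using this
  have hfLip : ∀ t ≥ (0:ℝ), ∀ u v : EuclideanSpace ℝ (Fin n),
      ‖fbar t u - fbar t v‖ ≤ (Lf:ℝ) * ‖u - v‖ := by
    intro t ht u v
    rw [hfbar, hfbar, ← smul_sub, norm_smul, ← Finset.sum_sub_distrib]
    have h1 : ‖∑ i, (f i t u - f i t v)‖ ≤ ∑ i : Fin N, (Lf:ℝ) * ‖u - v‖ :=
      (norm_sum_le _ _).trans (Finset.sum_le_sum fun i _ => hLipR i t ht u v)
    rw [Finset.sum_const, Finset.card_univ, Fintype.card_fin, nsmul_eq_mul] at h1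
    have h2 : ‖(N:ℝ)⁻¹‖ = (N:ℝ)⁻¹ := by
      rw [Real.norm_eq_abs, abs_of_pos (by positivity)]
    rw [h2]
    calc (N:ℝ)⁻¹ * ‖∑ i, (f i t u - f i t v)‖ ≤ (N:ℝ)⁻¹ * ((N:ℝ) * ((Lf:ℝ) * ‖u - v‖)) := by
          apply mul_le_mul_of_nonneg_left h1 (by positivity)
      _ = (Lf:ℝ) * ‖u - v‖ := by field_simp
  have hfbar0 : ∀ t ≥ (0:ℝ), ‖fbar t 0‖ ≤ K0 := by
    intro t ht
    rw [hfbar]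
    rw [norm_smul]
    have h1 : ‖∑ i, f i t 0‖ ≤ ∑ i : Fin N, K0 :=
      (norm_sum_le _ _).trans (Finset.sum_le_sum fun i _ => hK0 i t ht)
    rw [Finset.sum_const, Finset.card_univ, Fintype.card_fin, nsmul_eq_mul] at h1
    have h2 : ‖(N:ℝ)⁻¹‖ = (N:ℝ)⁻¹ := by
      rw [Real.norm_eq_abs, abs_of_pos (by positivity)]
    rw [h2]
    calc (N:ℝ)⁻¹ * ‖∑ i, f i t 0‖ ≤ (N:ℝ)⁻¹ * ((N:ℝ) * K0) := by
          apply mul_le_mul_of_nonneg_left h1 (by positivity)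
      _ = K0 := by field_simp
  -- one-sided Lipschitz of fbar
  have hosl : ∀ t ≥ (0:ℝ), ∀ u v : EuclideanSpace ℝ (Fin n),
      ⟪u - v, Hop (fbar t u - fbar t v)⟫ ≤ -(lamc/2) * ⟪u - v, Hop (u - v)⟫ :=
    contraction_osl fbar J hJ Hc lamc hHcsymm hcontr
  -- constants
  have hlm0 : 0 < lamc * m := mul_pos hlamc hm0
  obtain ⟨bs, hbsdef⟩ : ∃ bs : ℝ, bs = 4*M^2*K0^2/(lamc*m) := ⟨_, rfl⟩
  have hbs0 : 0 ≤ bs := by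
    rw [hbsdef]; exact div_nonneg (by positivity) hlm0.le
  obtain ⟨R2, hR2def⟩ : ∃ R2 : ℝ, R2 = (bs/(lamc/2) + 1)/m := ⟨_, rfl⟩
  have hR20 : 0 < R2 := by
    rw [hR2def]
    have h1 : 0 ≤ bs/(lamc/2) := div_nonneg hbs0 (by linarith)
    exact div_pos (by linarith) hm0
  obtain ⟨K, hKdef⟩ : ∃ K : ℝ, K = 2*(Lf:ℝ)*Real.sqrt R2 + 2*K0 := ⟨_, rfl⟩
  have hKnn : 0 ≤ K := by
    rw [hKdef]
    have h1 := Real.sqrt_nonneg R2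
    nlinarith only [h1, hLf0, hK00]
  obtain ⟨a, hadef⟩ : ∃ a : ℝ, a = lamc*m/(2*M) := ⟨_, rfl⟩
  have ha0 : 0 < a := by
    rw [hadef]; exact div_pos hlm0 (by linarith)
  obtain ⟨cY, hcYdef⟩ : ∃ cY : ℝ, cY = 8*M^2*(Lf:ℝ)^2/(lamc*m) := ⟨_, rfl⟩
  have hcY0 : 0 ≤ cY := by
    rw [hcYdef]; exact div_nonneg (by positivity) hlm0.le
  obtain ⟨k1, hk1def⟩ : ∃ k1 : ℝ, k1 = (lamc*m/2 + 2*M*(Lf:ℝ) + cY) * (4/(3*m*μ)) := ⟨_, rfl⟩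
  have hk10 : 0 ≤ k1 := by
    rw [hk1def]
    have h1 : 0 ≤ 2*M*(Lf:ℝ) := by nlinarith only [hM0, hLf0]
    have h2 : 0 ≤ 4/(3*m*μ) := div_nonneg (by norm_num) (by nlinarith only [hm0, hμ0])
    nlinarith only [h1, h2, hcY0, hlm0]
  obtain ⟨k2, hk2def⟩ : ∃ k2 : ℝ, k2 = (4*(N:ℝ)*M^2*K^2/(a*m*μ)) * (2/(m*ε^2)) := ⟨_, rfl⟩
  have hk20 : 0 ≤ k2 := by
    rw [hk2def]
    have h1 : 0 ≤ 4*(N:ℝ)*M^2*K^2 := by positivity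
    have h2 : 0 < a*m*μ := mul_pos (mul_pos ha0 hm0) hμ0
    have h3 : 0 < m*ε^2 := mul_pos hm0 (pow_pos hε 2)
    have h4 : 0 ≤ 4*(N:ℝ)*M^2*K^2/(a*m*μ) := div_nonneg h1 h2.le
    have h5 : 0 ≤ 2/(m*ε^2) := div_nonneg (by norm_num) h3.le
    exact mul_nonneg h4 h5
  refine ⟨max k1 k2 + 1, ?_, ?_⟩
  · have := le_trans hk10 (le_max_left k1 k2); linarith
  intro k hk x hx s hs
  have hk1 : k1 < k := lt_of_le_of_lt (le_max_left _ _) (by linarith)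
  have hk2 : k2 < k := lt_of_le_of_lt (le_max_right _ _) (by linarith)
  have hk0 : 0 < k := by
    have := le_trans hk10 (le_max_left k1 k2); linarith
  -- Step 1: eventual bound on s
  obtain ⟨T₀, hT₀0, hT₀⟩ : ∃ T₀ ≥ (0:ℝ), ∀ t ≥ T₀, ‖s t‖^2 ≤ R2 := by
    set Vs : ℝ → ℝ := fun t => ⟪s t, Hop (s t)⟫ with hVsdef
    set Vsd : ℝ → ℝ := fun t => 2*⟪s t, Hop (fbar t (s t))⟫ with hVsddef
    have hVs : ∀ t ≥ (0:ℝ), HasDerivAt Vs (Vsd t) t := by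
      intro t ht
      have h1 := hs t ht
      have h2 : HasDerivAt (fun τ => Hop (s τ)) (Hop (fbar t (s t))) t :=
        Hop.hasFDerivAt.comp_hasDerivAt t h1
      have h3 := HasDerivAt.inner ℝ h1 h2
      refine h3.congr_deriv ?_
      rw [hVsddef]
      rw [hsym (fbar t (s t)) (s t)]
      ring
    have hVsd_le : ∀ t ≥ (0:ℝ), Vsd t ≤ -(lamc/2) * Vs t + bs := by
      intro t ht
      have hd : Vsd t = 2*⟪s t, Hop (fbar t (s t) - fbar t 0)⟫ + 2*⟪s t, Hop (fbar t 0)⟫ := by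
        rw [hVsddef]
        show 2*⟪s t, Hop (fbar t (s t))⟫ = _
        rw [map_sub, inner_sub_right]; ring
      have h1 := hosl t ht (s t) 0
      rw [sub_zero] at h1
      have h2 : ⟪s t, Hop (fbar t 0)⟫ ≤ M * ‖s t‖ * ‖fbar t 0‖ := hMb _ _
      have h4 : M*‖s t‖*‖fbar t 0‖ ≤ M*‖s t‖*K0 := by
        apply mul_le_mul_of_nonneg_left (hfbar0 t ht) (mul_nonneg hM0.le (norm_nonneg _))
      have h5 := young (θ := lamc*m/2) (by linarith) (‖s t‖) (2*M*K0)
      have h6 : 1/(2*(lamc*m/2))*(2*M*K0)^2 = bs := by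
        rw [hbsdef]; field_simp; ring
      have h7 : m*‖s t‖^2 ≤ ⟪s t, Hop (s t)⟫ := hmq _
      have h8 : 0 ≤ ⟪s t, Hop (s t)⟫ := hqnn _
      have h9 : lamc/4*(m*‖s t‖^2) ≤ lamc/4*⟪s t, Hop (s t)⟫ :=
        mul_le_mul_of_nonneg_left h7 (by linarith)
      have h10 : 0 ≤ lamc * ⟪s t, Hop (s t)⟫ := mul_nonneg hlamc.le h8
      rw [hd]
      have hVseq : Vs t = ⟪s t, Hop (s t)⟫ := rfl
      rw [hVseq]
      have hI2 : 2*⟪s t, Hop (fbar t 0)⟫ ≤ lamc/4*⟪s t, Hop (s t)⟫ + bs := by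
        linarith only [h2, h4, h5, h6, h9]
      linarith only [h1, hI2, h10]
    have hgbs := gronwall_bound (by linarith : (0:ℝ) < lamc/2) hVs hVsd_le
    set Cs : ℝ := (Vs 0 - bs/(lamc/2)) * Real.exp (lamc/2*0) with hCsdef
    have htend : Tendsto (fun t => Cs * Real.exp (-(lamc/2*t))) atTop (nhds 0) := by
      have h1 : Tendsto (fun t : ℝ => lamc/2*t) atTop atTop :=
        Tendsto.const_mul_atTop (by linarith) tendsto_id
      have h2 : Tendsto (fun t : ℝ => Real.exp (-(lamc/2*t))) atTop (nhds 0) :=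
        Real.tendsto_exp_neg_atTop_nhds_zero.comp h1
      have h3 := h2.const_mul Cs
      simpa using h3
    have hev : ∀ᶠ t in atTop, Cs * Real.exp (-(lamc/2*t)) ≤ 1 :=
      htend.eventually (eventually_le_nhds one_pos)
    obtain ⟨T₁, hT₁⟩ := (eventually_atTop).1 (hev.and (eventually_ge_atTop 0))
    refine ⟨max T₁ 0, le_max_right _ _, fun t ht => ?_⟩
    have ht0 : (0:ℝ) ≤ t := le_trans (le_max_right _ _) ht
    have htT1 : T₁ ≤ t := le_trans (le_max_left _ _) ht
    have h1 := hgbs t ht0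
    have h2 := (hT₁ t htT1).1
    have h3 : m*‖s t‖^2 ≤ bs/(lamc/2) + 1 := le_trans (hmq _) (by
      have hVseq : Vs t = ⟪s t, Hop (s t)⟫ := rfl
      rw [← hVseq]
      linarith)
    rw [hR2def, le_div_iff₀ hm0]
    linarith
  -- Step 2: error dynamics
  set e : Fin N → ℝ → EuclideanSpace ℝ (Fin n) := fun i t => x i t - s t with hedef
  set eb : ℝ → EuclideanSpace ℝ (Fin n) := fun t => (N:ℝ)⁻¹ • ∑ i, e i t with hebdef
  set d : Fin N → ℝ → EuclideanSpace ℝ (Fin n) := fun i t => e i t - eb t with hddef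
  set Dx : Fin N → ℝ → EuclideanSpace ℝ (Fin n) := fun i t =>
    (f i t (x i t) + k • ∑ p ∈ G.neighborFinset i, (x p t - x i t)) - fbar t (s t) with hDxdef
  set V : ℝ → ℝ := fun t => ∑ i, ⟪e i t, Hop (e i t)⟫ with hVdef
  set Vd : ℝ → ℝ := fun t => ∑ i, 2*⟪e i t, Hop (Dx i t)⟫ with hVddef
  obtain ⟨bk, hbkdef⟩ : ∃ bk : ℝ, bk = 4*(N:ℝ)*M^2*K^2/(k*m*μ) := ⟨_, rfl⟩
  have hkmμ : 0 < k*m*μ := mul_pos (mul_pos hk0 hm0) hμ0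
  have hbk0 : 0 ≤ bk := by
    rw [hbkdef]; exact div_nonneg (by positivity) hkmμ.le
  have he : ∀ i, ∀ t ≥ (0:ℝ), HasDerivAt (e i) (Dx i t) t :=
    fun i t ht => (hx i t ht).sub (hs t ht)
  have hV : ∀ t ≥ (0:ℝ), HasDerivAt V (Vd t) t := by
    intro t ht
    have hterm : ∀ i ∈ Finset.univ, HasDerivAt (fun τ => ⟪e i τ, Hop (e i τ)⟫)
        (2*⟪e i t, Hop (Dx i t)⟫) t := by
      intro i _
      have h1 := he i t ht
      have h2 : HasDerivAt (fun τ => Hop (e i τ)) (Hop (Dx i t)) t :=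
        Hop.hasFDerivAt.comp_hasDerivAt t h1
      have h3 := HasDerivAt.inner ℝ h1 h2
      refine h3.congr_deriv ?_
      rw [hsym (Dx i t) (e i t)]
      ring
    exact HasDerivAt.fun_sum hterm
  -- Step 3: the key differential inequality
  have hVd_le : ∀ t ≥ T₀, Vd t ≤ -a * V t + bk := by
    intro t ht
    have ht0 : (0:ℝ) ≤ t := le_trans hT₀0 ht
    have hst : ‖s t‖ ≤ Real.sqrt R2 := by
      have h1 := hT₀ t ht
      have h2 : ‖s t‖ = Real.sqrt (‖s t‖^2) := (Real.sqrt_sq (norm_nonneg _)).symm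
      rw [h2]; exact Real.sqrt_le_sqrt h1
    set Ai : Fin N → EuclideanSpace ℝ (Fin n) :=
      fun i => f i t (x i t) - f i t (s t + eb t) with hAidef
    set Ci : Fin N → EuclideanSpace ℝ (Fin n) :=
      fun i => f i t (s t + eb t) - f i t (s t) with hCidef
    set gi : Fin N → EuclideanSpace ℝ (Fin n) :=
      fun i => f i t (s t) - fbar t (s t) with hgidef
    set B : ℝ := ‖eb t‖ with hBdef
    set D : Fin N → ℝ := fun i => ‖d i t‖ with hDdef
    have hB0 : 0 ≤ B := norm_nonneg _
    have hD0 : ∀ i, 0 ≤ D i := fun i => norm_nonneg _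
    have hP0 : 0 ≤ ∑ i, D i^2 := Finset.sum_nonneg fun i _ => sq_nonneg _
    -- structural facts
    have h_ed : ∀ i, e i t = eb t + d i t := by
      intro i; simp only [hddef, hedef, hebdef]; abel
    have h_sumd : ∑ i, d i t = 0 := by
      rw [hddef]
      rw [Finset.sum_sub_distrib, Finset.sum_const, Finset.card_univ, Fintype.card_fin]
      rw [hebdef, ← Nat.cast_smul_eq_nsmul ℝ, smul_smul, mul_inv_cancel₀ hNne, one_smul, sub_self]
    have h_xps : ∀ p i : Fin N, x p t - x i t = e p t - e i t := by
      intro p i; rw [hedef]; beta_reduce; abel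
    have h_xd : ∀ i, x i t - (s t + eb t) = d i t := by
      intro i; rw [hddef, hedef]; beta_reduce; abel
    -- derivative decomposition
    have h_dec : ∀ i, Dx i t = (Ai i + Ci i + gi i)
        + k • ∑ p ∈ G.neighborFinset i, (e p t - e i t) := by
      intro i
      rw [hDxdef, hAidef, hCidef, hgidef]
      show (f i t (x i t) + k • ∑ p ∈ G.neighborFinset i, (x p t - x i t)) - fbar t (s t) = _
      rw [Finset.sum_congr rfl fun p _ => h_xps p i]
      beta_reduce
      abel
    -- coupling identity
    have hswap : ∀ F : Fin N → Fin N → ℝ, (∑ i, ∑ p ∈ G.neighborFinset i, F i p)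
        = ∑ i, ∑ p ∈ G.neighborFinset i, F p i := by
      intro F
      have h1 : ∀ (Fn : Fin N → Fin N → ℝ), (∑ i, ∑ p ∈ G.neighborFinset i, Fn i p)
          = ∑ i, ∑ p, if G.Adj i p then Fn i p else 0 := by
        intro Fn
        refine Finset.sum_congr rfl fun i _ => ?_
        rw [SimpleGraph.neighborFinset_eq_filter, Finset.sum_filter]
      rw [h1, h1, Finset.sum_comm]
      refine Finset.sum_congr rfl fun i _ => Finset.sum_congr rfl fun p _ => ?_
      by_cases h : G.Adj i p
      · rw [if_pos (G.adj_symm h), if_pos h]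
      · rw [if_neg (fun hh => h (G.adj_symm hh)), if_neg h]
    have hexp2 : ∀ i p : Fin N, ⟪e i t, Hop (e p t - e i t)⟫
        = ⟪e i t, Hop (e p t)⟫ - ⟪e i t, Hop (e i t)⟫ := by
      intro i p; rw [map_sub, inner_sub_right]
    have hexp : ∀ i p : Fin N, ⟪e i t - e p t, Hop (e i t - e p t)⟫
        = ⟪e i t, Hop (e i t)⟫ - 2*⟪e i t, Hop (e p t)⟫ + ⟪e p t, Hop (e p t)⟫ := by
      intro i p
      rw [map_sub, inner_sub_left, inner_sub_right, inner_sub_right,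
        hsym (e p t) (e i t)]
      ring
    set T1 : ℝ := ∑ i, ∑ p ∈ G.neighborFinset i, ⟪e i t, Hop (e p t - e i t)⟫ with hT1def
    have h_T1 : T1 = -(1/2) * ∑ i, ∑ p ∈ G.neighborFinset i,
        ⟪e i t - e p t, Hop (e i t - e p t)⟫ := by
      have e1 : T1 = (∑ i, ∑ p ∈ G.neighborFinset i, ⟪e i t, Hop (e p t)⟫)
          - (∑ i, ∑ p ∈ G.neighborFinset i, ⟪e i t, Hop (e i t)⟫) := by
        rw [hT1def, ← Finset.sum_sub_distrib]
        refine Finset.sum_congr rfl fun i _ => ?_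
        rw [← Finset.sum_sub_distrib]
        exact Finset.sum_congr rfl fun p _ => hexp2 i p
      have e2 : (∑ i, ∑ p ∈ G.neighborFinset i, ⟪e i t - e p t, Hop (e i t - e p t)⟫)
          = (∑ i, ∑ p ∈ G.neighborFinset i, ⟪e i t, Hop (e i t)⟫)
            - 2*(∑ i, ∑ p ∈ G.neighborFinset i, ⟪e i t, Hop (e p t)⟫)
            + (∑ i, ∑ p ∈ G.neighborFinset i, ⟪e p t, Hop (e p t)⟫) := by
        rw [Finset.sum_congr rfl fun i _ => Finset.sum_congr rfl fun p _ => hexp i p]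
        rw [Finset.mul_sum, ← Finset.sum_sub_distrib, ← Finset.sum_add_distrib]
        refine Finset.sum_congr rfl fun i _ => ?_
        rw [Finset.mul_sum, ← Finset.sum_sub_distrib, ← Finset.sum_add_distrib]
      have e3 : (∑ i, ∑ p ∈ G.neighborFinset i, ⟪e p t, Hop (e p t)⟫)
          = ∑ i, ∑ p ∈ G.neighborFinset i, ⟪e i t, Hop (e i t)⟫ :=
        (hswap (fun i p => ⟪e i t, Hop (e i t)⟫)).symm ▸
          hswap (fun i p => ⟪e p t, Hop (e p t)⟫)
      linarith only [e1, e2, e3]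
    have hT1b : T1 ≤ -(m*μ/2) * ∑ i, D i^2 := by
      have h2 : ∀ i p : Fin N, e i t - e p t = d i t - d p t := by
        intro i p; rw [hddef]; beta_reduce; abel
      have h3 : μ * ∑ i, D i^2 ≤ ∑ i, ∑ p ∈ G.neighborFinset i, ‖d i t - d p t‖^2 := by
        rw [hDdef]
        exact hgap (fun i => d i t) h_sumd
      have h6 : m * ∑ i, ∑ p ∈ G.neighborFinset i, ‖d i t - d p t‖^2
          ≤ ∑ i, ∑ p ∈ G.neighborFinset i, ⟪e i t - e p t, Hop (e i t - e p t)⟫ := by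
        rw [Finset.mul_sum]
        refine Finset.sum_le_sum fun i _ => ?_
        rw [Finset.mul_sum]
        refine Finset.sum_le_sum fun p _ => ?_
        rw [← h2 i p]
        exact hmq _
      have h7 := mul_le_mul_of_nonneg_left h3 hm0.le
      rw [h_T1]
      linarith only [h6, h7]
    have hcoup : 2*k*T1 ≤ -(k*m*μ)*∑ i, D i^2 := by
      have h1 := mul_le_mul_of_nonneg_left hT1b (by linarith : (0:ℝ) ≤ 2*k)
      nlinarith only [h1]
    -- splitting Vd
    have h_split : Vd t = (∑ i, 2*⟪e i t, Hop (Ai i)⟫) + (∑ i, 2*⟪e i t, Hop (Ci i)⟫)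
        + (∑ i, 2*⟪e i t, Hop (gi i)⟫) + 2*k*T1 := by
      have hterm : ∀ i, 2*⟪e i t, Hop (Dx i t)⟫
          = (2*⟪e i t, Hop (Ai i)⟫ + 2*⟪e i t, Hop (Ci i)⟫ + 2*⟪e i t, Hop (gi i)⟫)
            + 2*k*(∑ p ∈ G.neighborFinset i, ⟪e i t, Hop (e p t - e i t)⟫) := by
        intro i
        rw [h_dec i]
        rw [map_add, inner_add_right, map_add, inner_add_right, map_add, inner_add_right]
        rw [_root_.map_smul, real_inner_smul_right]
        rw [_root_.map_sum, inner_sum]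
        ring
      have hVdeq : Vd t = ∑ i, 2*⟪e i t, Hop (Dx i t)⟫ := rfl
      rw [hVdeq, Finset.sum_congr rfl fun i _ => hterm i]
      rw [Finset.sum_add_distrib, Finset.sum_add_distrib, Finset.sum_add_distrib]
      rw [hT1def, Finset.mul_sum]
    -- bound on the A-term
    have hSA : ∑ i, 2*⟪e i t, Hop (Ai i)⟫
        ≤ ∑ i, (2*M*(Lf:ℝ)*B*D i + 2*M*(Lf:ℝ)*D i^2) := by
      refine Finset.sum_le_sum fun i _ => ?_
      have h1 : ⟪e i t, Hop (Ai i)⟫ ≤ M*‖e i t‖*‖Ai i‖ := hMb _ _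
      have h2 : ‖Ai i‖ ≤ (Lf:ℝ)*D i := by
        rw [hAidef, hDdef]
        show ‖f i t (x i t) - f i t (s t + eb t)‖ ≤ (Lf:ℝ)*‖d i t‖
        rw [← h_xd i]
        exact hLipR i t ht0 _ _
      have h3 : ‖e i t‖ ≤ B + D i := by
        rw [h_ed i, hBdef, hDdef]
        exact norm_add_le _ _
      have h4 : M*‖e i t‖*‖Ai i‖ ≤ M*(B + D i)*((Lf:ℝ)*D i) := by
        have hMB : 0 ≤ M*‖e i t‖ := mul_nonneg hM0.le (norm_nonneg _)
        have h5 : M*‖e i t‖ ≤ M*(B + D i) := mul_le_mul_of_nonneg_left h3 hM0.le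
        have h6 : 0 ≤ (Lf:ℝ)*D i := mul_nonneg hLf0 (hD0 i)
        calc M*‖e i t‖*‖Ai i‖ ≤ M*‖e i t‖*((Lf:ℝ)*D i) :=
              mul_le_mul_of_nonneg_left h2 hMB
          _ ≤ M*(B + D i)*((Lf:ℝ)*D i) := mul_le_mul_of_nonneg_right h5 h6
      nlinarith only [h1, h4]
    -- bound on the C-term
    have hSC : ∑ i, 2*⟪e i t, Hop (Ci i)⟫
        ≤ -((N:ℝ)*lamc*m*B^2) + ∑ i, 2*M*(Lf:ℝ)*B*D i := by
      have hsplitC : ∀ i, ⟪e i t, Hop (Ci i)⟫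
          = ⟪eb t, Hop (Ci i)⟫ + ⟪d i t, Hop (Ci i)⟫ := by
        intro i; rw [h_ed i, inner_add_left]
      have hCsum : ∑ i, Ci i = (N:ℝ) • (fbar t (s t + eb t) - fbar t (s t)) := by
        rw [hCidef]
        show ∑ i, (f i t (s t + eb t) - f i t (s t)) = _
        rw [Finset.sum_sub_distrib, hsumf, hsumf, smul_sub]
      have h1 : ∑ i, ⟪eb t, Hop (Ci i)⟫ = ⟪eb t, Hop (∑ i, Ci i)⟫ := by
        rw [_root_.map_sum, inner_sum]
      have h2 : ⟪eb t, Hop (∑ i, Ci i)⟫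
          = (N:ℝ) * ⟪eb t, Hop (fbar t (s t + eb t) - fbar t (s t))⟫ := by
        rw [hCsum, _root_.map_smul, real_inner_smul_right]
      have h3 : ⟪eb t, Hop (fbar t (s t + eb t) - fbar t (s t))⟫
          ≤ -(lamc/2)*⟪eb t, Hop (eb t)⟫ := by
        have h := hosl t ht0 (s t + eb t) (s t)
        rwa [add_sub_cancel_left] at h
      have h4 : m*B^2 ≤ ⟪eb t, Hop (eb t)⟫ := hmq _
      have h6 : 2*⟪eb t, Hop (∑ i, Ci i)⟫ ≤ -((N:ℝ)*lamc*m*B^2) := by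
        rw [h2]
        have h7 := mul_le_mul_of_nonneg_left h3 (by linarith : (0:ℝ) ≤ 2*(N:ℝ))
        have h8 := mul_le_mul_of_nonneg_left h4 (mul_nonneg hN0.le hlamc.le)
        nlinarith only [h7, h8]
      have h9 : ∀ i, 2*⟪d i t, Hop (Ci i)⟫ ≤ 2*M*(Lf:ℝ)*B*D i := by
        intro i
        have hC : ‖Ci i‖ ≤ (Lf:ℝ)*B := by
          rw [hCidef, hBdef]
          show ‖f i t (s t + eb t) - f i t (s t)‖ ≤ (Lf:ℝ)*‖eb t‖
          have h := hLipR i t ht0 (s t + eb t) (s t)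
          rwa [add_sub_cancel_left] at h
        have h10 : ⟪d i t, Hop (Ci i)⟫ ≤ M*‖d i t‖*‖Ci i‖ := hMb _ _
        have h11 : M*‖d i t‖*‖Ci i‖ ≤ M*D i*((Lf:ℝ)*B) := by
          have : M*‖d i t‖ = M*D i := by rw [hDdef]
          rw [this]
          exact mul_le_mul_of_nonneg_left hC (mul_nonneg hM0.le (hD0 i))
        nlinarith only [h10, h11]
      have h12 : ∑ i, 2*⟪e i t, Hop (Ci i)⟫
          = 2*⟪eb t, Hop (∑ i, Ci i)⟫ + ∑ i, 2*⟪d i t, Hop (Ci i)⟫ := by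
        rw [← h1, Finset.mul_sum, ← Finset.sum_add_distrib]
        exact Finset.sum_congr rfl fun i _ => by rw [hsplitC i]; ring
      have h13 : ∑ i, 2*⟪d i t, Hop (Ci i)⟫ ≤ ∑ i, 2*M*(Lf:ℝ)*B*D i :=
        Finset.sum_le_sum fun i _ => h9 i
      linarith only [h6, h12, h13]
    -- bound on the g-term
    have hSG : ∑ i, 2*⟪e i t, Hop (gi i)⟫ ≤ ∑ i, 2*M*K*D i := by
      have h_sumg : ∑ i, gi i = 0 := by
        rw [hgidef]
        show ∑ i, (f i t (s t) - fbar t (s t)) = 0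
        rw [Finset.sum_sub_distrib, hsumf, Finset.sum_const, Finset.card_univ,
          Fintype.card_fin, ← Nat.cast_smul_eq_nsmul ℝ, sub_self]
      have hsplitg : ∀ i, ⟪e i t, Hop (gi i)⟫
          = ⟪eb t, Hop (gi i)⟫ + ⟪d i t, Hop (gi i)⟫ := by
        intro i; rw [h_ed i, inner_add_left]
      have h1g : ∑ i, ⟪eb t, Hop (gi i)⟫ = ⟪eb t, Hop (∑ i, gi i)⟫ := by
        rw [_root_.map_sum, inner_sum]
      have hgK : ∀ i, ‖gi i‖ ≤ K := by
        intro i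
        rw [hgidef, hKdef]
        show ‖f i t (s t) - fbar t (s t)‖ ≤ _
        have t0 : ‖f i t (s t)‖ ≤ ‖f i t (s t) - f i t 0‖ + ‖f i t 0‖ := by
          calc ‖f i t (s t)‖ = ‖(f i t (s t) - f i t 0) + f i t 0‖ := by rw [sub_add_cancel]
            _ ≤ _ := norm_add_le _ _
        have t1 : ‖fbar t (s t)‖ ≤ ‖fbar t (s t) - fbar t 0‖ + ‖fbar t 0‖ := by
          calc ‖fbar t (s t)‖ = ‖(fbar t (s t) - fbar t 0) + fbar t 0‖ := by rw [sub_add_cancel]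
            _ ≤ _ := norm_add_le _ _
        have t2 : ‖f i t (s t) - f i t 0‖ ≤ (Lf:ℝ)*‖s t‖ := by
          have := hLipR i t ht0 (s t) 0
          rwa [sub_zero] at this
        have t3 : ‖fbar t (s t) - fbar t 0‖ ≤ (Lf:ℝ)*‖s t‖ := by
          have := hfLip t ht0 (s t) 0
          rwa [sub_zero] at this
        have t4 : ‖f i t 0‖ ≤ K0 := hK0 i t ht0
        have t5 : ‖fbar t 0‖ ≤ K0 := hfbar0 t ht0
        have t6 : (Lf:ℝ)*‖s t‖ ≤ (Lf:ℝ)*Real.sqrt R2 := mul_le_mul_of_nonneg_left hst hLf0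
        have t7 := norm_sub_le (f i t (s t)) (fbar t (s t))
        linarith only [t0, t1, t2, t3, t4, t5, t6, t7]
      have h2 : ∀ i, 2*⟪d i t, Hop (gi i)⟫ ≤ 2*M*K*D i := by
        intro i
        have h3 : ⟪d i t, Hop (gi i)⟫ ≤ M*‖d i t‖*‖gi i‖ := hMb _ _
        have h4 : M*‖d i t‖*‖gi i‖ ≤ M*D i*K := by
          have heq : M*‖d i t‖ = M*D i := by rw [hDdef]
          rw [heq]
          exact mul_le_mul_of_nonneg_left (hgK i) (mul_nonneg hM0.le (hD0 i))
        nlinarith only [h3, h4]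
      have h5 : ∑ i, 2*⟪e i t, Hop (gi i)⟫ = ∑ i, 2*⟪d i t, Hop (gi i)⟫ := by
        have h12g : ∑ i, 2*⟪e i t, Hop (gi i)⟫
            = 2*⟪eb t, Hop (∑ i, gi i)⟫ + ∑ i, 2*⟪d i t, Hop (gi i)⟫ := by
          rw [← h1g, Finset.mul_sum, ← Finset.sum_add_distrib]
          exact Finset.sum_congr rfl fun i _ => by rw [hsplitg i]; ring
        rw [h12g, h_sumg, map_zero, inner_zero_right, mul_zero, zero_add]
      rw [h5]
      exact Finset.sum_le_sum fun i _ => h2 i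
    -- Young's inequalities (summed)
    have hy2' : (∑ i, 2*M*(Lf:ℝ)*B*D i) + (∑ i, 2*M*(Lf:ℝ)*B*D i)
        ≤ (N:ℝ)*(lamc*m/2)*B^2 + cY*∑ i, D i^2 := by
      have h1 : ∀ i : Fin N, 2*M*(Lf:ℝ)*B*D i + 2*M*(Lf:ℝ)*B*D i
          ≤ (lamc*m/2)*B^2 + cY*D i^2 := by
        intro i
        have hy := young (θ := lamc*m) hlm0 B (4*M*(Lf:ℝ)*D i)
        have h2 : 1/(2*(lamc*m))*(4*M*(Lf:ℝ)*D i)^2 = cY*D i^2 := by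
          rw [hcYdef]
          first
          | (field_simp; ring)
          | field_simp
        nlinarith only [hy, h2]
      have h2 : (∑ i : Fin N, ((lamc*m/2)*B^2 + cY*D i^2))
          = (N:ℝ)*((lamc*m/2)*B^2) + cY*∑ i, D i^2 := by
        rw [Finset.sum_add_distrib, Finset.sum_const, Finset.card_univ, Fintype.card_fin,
          nsmul_eq_mul, ← Finset.mul_sum]
      have h3 : (∑ i, (2*M*(Lf:ℝ)*B*D i + 2*M*(Lf:ℝ)*B*D i))
          ≤ ∑ i : Fin N, ((lamc*m/2)*B^2 + cY*D i^2) :=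
        Finset.sum_le_sum fun i _ => h1 i
      have h4 : (∑ i, (2*M*(Lf:ℝ)*B*D i + 2*M*(Lf:ℝ)*B*D i))
          = (∑ i, 2*M*(Lf:ℝ)*B*D i) + (∑ i, 2*M*(Lf:ℝ)*B*D i) := Finset.sum_add_distrib
      linarith only [h2, h3, h4]
    have hy3 : ∑ i, 2*M*K*D i ≤ (k*m*μ/4)*∑ i, D i^2 + bk := by
      have h1 : ∀ i : Fin N, 2*M*K*D i ≤ (k*m*μ/4)*D i^2 + 4*M^2*K^2/(k*m*μ) := by
        intro i
        have hθ : (0:ℝ) < k*m*μ/2 := by linarith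
        have hy := young (θ := k*m*μ/2) hθ (D i) (2*M*K)
        have h2 : 1/(2*(k*m*μ/2))*(2*M*K)^2 = 4*M^2*K^2/(k*m*μ) := by
          first
          | (field_simp; ring)
          | field_simp
        nlinarith only [hy, h2]
      have h2 : ∑ i, 2*M*K*D i ≤ ∑ i : Fin N, ((k*m*μ/4)*D i^2 + 4*M^2*K^2/(k*m*μ)) :=
        Finset.sum_le_sum fun i _ => h1 i
      have h2eq : (∑ i : Fin N, ((k*m*μ/4)*D i^2 + 4*M^2*K^2/(k*m*μ)))
          = (k*m*μ/4)*∑ i, D i^2 + (N:ℝ)*(4*M^2*K^2/(k*m*μ)) := by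
        rw [Finset.sum_add_distrib, ← Finset.mul_sum, Finset.sum_const, Finset.card_univ,
          Fintype.card_fin, nsmul_eq_mul]
      have h3 : (N:ℝ)*(4*M^2*K^2/(k*m*μ)) = bk := by
        rw [hbkdef]
        first
        | (field_simp; ring)
        | field_simp
      linarith only [h2, h2eq, h3]
    -- Pythagoras    -- Pythagoras and the final combination
    have hpyth : V t ≤ M*((N:ℝ)*B^2 + ∑ i, D i^2) := by
      have h1 : ∀ i, ‖e i t‖^2 = B^2 + 2*⟪eb t, d i t⟫ + D i^2 := by
        intro i
        rw [h_ed i, hBdef, hDdef]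
        rw [norm_add_sq_real]
      have h2 : ∑ i, ⟪eb t, d i t⟫ = ⟪eb t, ∑ i, d i t⟫ := by rw [inner_sum]
      have h3 : V t ≤ M * ∑ i, ‖e i t‖^2 := by
        rw [Finset.mul_sum]
        exact Finset.sum_le_sum fun i _ => hMq _
      have h4 : ∑ i, ‖e i t‖^2 = (N:ℝ)*B^2 + ∑ i, D i^2 := by
        rw [Finset.sum_congr rfl fun i _ => h1 i]
        rw [Finset.sum_add_distrib, Finset.sum_add_distrib, Finset.sum_const,
          Finset.card_univ, Fintype.card_fin, nsmul_eq_mul, ← Finset.mul_sum, h2,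
          h_sumd, inner_zero_right]
        ring
      rw [← h4]; exact h3
    have hk1' : lamc*m/2 + 2*M*(Lf:ℝ) + cY ≤ 3/4*(k*m*μ) := by
      have hmμ : (0:ℝ) < 3*m*μ/4 := by nlinarith only [hm0, hμ0]
      have hid : k1*(3*m*μ/4) = lamc*m/2 + 2*M*(Lf:ℝ) + cY := by
        rw [hk1def]
        field_simp
      have h1 : k1*(3*m*μ/4) ≤ k*(3*m*μ/4) := mul_le_mul_of_nonneg_right hk1.le hmμ.le
      nlinarith only [hid, h1]
    have haM : a*M = lamc*m/2 := by
      rw [hadef]; field_simp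
    have haV : a*V t ≤ (lamc*m/2)*((N:ℝ)*B^2 + ∑ i, D i^2) := by
      calc a*V t ≤ a*(M*((N:ℝ)*B^2 + ∑ i, D i^2)) :=
            mul_le_mul_of_nonneg_left hpyth ha0.le
        _ = (a*M)*((N:ℝ)*B^2 + ∑ i, D i^2) := by ring
        _ = (lamc*m/2)*((N:ℝ)*B^2 + ∑ i, D i^2) := by rw [haM]
    have hk1P := mul_le_mul_of_nonneg_right hk1' hP0
    have hSAs : ∑ i, (2*M*(Lf:ℝ)*B*D i + 2*M*(Lf:ℝ)*D i^2)
        = (∑ i, 2*M*(Lf:ℝ)*B*D i) + 2*M*(Lf:ℝ)*∑ i, D i^2 := by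
      rw [Finset.sum_add_distrib]
      congr 1
      rw [Finset.mul_sum]
    linarith only [h_split, hSA, hSC, hSG, hcoup, hy2', hy3, hk1P, haV, hSAs]
  -- Step 4: conclusion
  have hgb := gronwall_bound ha0 (fun t ht => hV t (le_trans hT₀0 ht)) hVd_le
  set Ck : ℝ := (V T₀ - bk/a) * Real.exp (a*T₀) with hCkdef
  have hmε : 0 < m*ε^2/2 := half_pos (mul_pos hm0 (pow_pos hε 2))
  have htend2 : Tendsto (fun t => Ck * Real.exp (-(a*t))) atTop (nhds 0) := by
    have h1 : Tendsto (fun t : ℝ => a*t) atTop atTop :=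
      Tendsto.const_mul_atTop ha0 tendsto_id
    have h2 : Tendsto (fun t : ℝ => Real.exp (-(a*t))) atTop (nhds 0) :=
      Real.tendsto_exp_neg_atTop_nhds_zero.comp h1
    simpa using h2.const_mul Ck
  have hev2 : ∀ᶠ t in atTop, Ck * Real.exp (-(a*t)) ≤ m*ε^2/2 :=
    htend2.eventually (eventually_le_nhds hmε)
  have hbka : bk/a ≤ m*ε^2/2 := by
    have hX0 : (0:ℝ) ≤ a*m*μ*(m*ε^2)/2 := by
      have := mul_pos (mul_pos (mul_pos ha0 hm0) hμ0) (mul_pos hm0 (pow_pos hε 2))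
      linarith
    have hamμ : a*m*μ ≠ 0 := (mul_pos (mul_pos ha0 hm0) hμ0).ne'
    have hmε2 : m*ε^2 ≠ 0 := (mul_pos hm0 (pow_pos hε 2)).ne'
    have hid : k2 * (a*m*μ*(m*ε^2)/2) = 4*(N:ℝ)*M^2*K^2 := by
      rw [hk2def]; field_simp
    have h1 : k2 * (a*m*μ*(m*ε^2)/2) ≤ k * (a*m*μ*(m*ε^2)/2) :=
      mul_le_mul_of_nonneg_right hk2.le hX0
    rw [div_le_iff₀ ha0, hbkdef, div_le_iff₀ hkmμ]
    calc 4*(N:ℝ)*M^2*K^2 = k2*(a*m*μ*(m*ε^2)/2) := hid.symm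
      _ ≤ k*(a*m*μ*(m*ε^2)/2) := h1
      _ = m*ε^2/2*a*(k*m*μ) := by ring
  intro i
  have hev3 : ∀ᶠ t in atTop, ‖x i t - s t‖ ≤ ε := by
    filter_upwards [hev2, eventually_ge_atTop T₀] with t h2 h1
    have hVt := hgb t h1
    have hVle : V t ≤ m*ε^2 := by linarith
    have hqi : m*‖e i t‖^2 ≤ V t := by
      calc m*‖e i t‖^2 ≤ ⟪e i t, Hop (e i t)⟫ := hmq _
        _ ≤ V t := Finset.single_le_sum (fun j _ => hqnn (e j t)) (Finset.mem_univ i)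
    have h3 : ‖e i t‖^2 ≤ ε^2 := by
      have := hqi.trans hVle
      nlinarith only [this, hm0]
    have h4 : ‖e i t‖ ≤ ε := by
      have := Real.sqrt_le_sqrt h3
      rwa [Real.sqrt_sq (norm_nonneg _), Real.sqrt_sq hε.le] at this
    exact h4
  have hcob : IsCoboundedUnder (· ≤ ·) atTop (fun t => ‖x i t - s t‖) :=
    Filter.IsBoundedUnder.isCoboundedUnder_le (isBoundedUnder_of ⟨0, fun t => norm_nonneg _⟩)
  exact Filter.limsup_le_of_le hcob hev3
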